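/- Let S = {x_1, ..., x_k} be a set of k positive integers. Let G be the graph constructed from S by creating, for each x_i, a connected component consisting of two disjoint cliques C¹_i and C²_i, each of size 2x_i, with a fixed bijection (counterpart map) between them, where each vertex of C¹_i is additionally adjacent to every vertex of C²_i except its counterpart, and taking the disjoint union over i. Let G' be the graph consisting of two disjoint copies G_1 and G_2 of G together with two additional vertices v_1 and v_2, where v_1 is adjacent to every vertex of G_1, v_2 is adjacent to every vertex of G_2, and v_1 is adjacent to v_2. Then S has an equal sum partition if and only if there does not exist an information dominating set in G' of size at most 2k. -/

import Mathlib

open Classical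

/-- A binary opinion profile `μ` on a finite simple graph `G` is valid under the
local majority rule. -/
def IsValidProfile {V : Type*} [Fintype V] (G : SimpleGraph V) (μ : V → Bool) : Prop :=
  ∀ v : V,
    ((G.neighborFinset v).filter fun u => μ u = μ v).card ≥
    ((G.neighborFinset v).filter fun u => μ u ≠ μ v).card

/-- A subset `D` of the vertices is an information dominating set: any two valid
opinion profiles that agree on `D` are equal. -/
def IsIDS {V : Type*} [Fintype V] (G : SimpleGraph V) (D : Set V) : Prop :=
  ∀ μ ν : V → Bool, IsValidProfile G μ → IsValidProfile G ν →
    (∀ v ∈ D, μ v = ν v) → μ = ν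

/-- The graph constructed from a set `S` of positive integers: for each `x ∈ S`
there is one connected component whose vertices are `Fin 2 × Fin (2 * x)`
(two cliques `C¹ = {0} × Fin (2x)` and `C² = {1} × Fin (2x)`, with counterpart map
`(0, j) ↔ (1, j)`).  Within a component, two vertices are adjacent iff their
`Fin (2x)`-indices differ: this makes each `Cᶜ` a clique of size `2x` and joins every
vertex of `C¹` to every vertex of `C²` except its counterpart.  Distinct components
are not joined. -/
def sppGraph (S : Finset ℕ) :
    SimpleGraph (Σ x : {x // x ∈ S}, Fin 2 × Fin (2 * x.val)) where
  Adj a b := a.1 = b.1 ∧ (a.2.2 : ℕ) ≠ (b.2.2 : ℕ)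
  symm := by
    refine ⟨?_⟩; rintro a b ⟨h1, h2⟩
    exact ⟨h1.symm, h2.symm⟩
  loopless := by
    refine ⟨?_⟩; rintro a ⟨-, h⟩
    exact h rfl

/-- The graph `G'` built from `G`: two disjoint copies `G × {0}` and `G × {1}` of `G`,
plus two extra vertices `v₁ = Sum.inr 0` and `v₂ = Sum.inr 1`, where `vᵢ` is joined to
every vertex of copy `i`, and `v₁` is joined to `v₂`. -/
def doubledGraph {V : Type*} (G : SimpleGraph V) : SimpleGraph (V × Fin 2 ⊕ Fin 2) where
  Adj x y :=
    match x, y with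
    | Sum.inl (a, i), Sum.inl (b, j) => i = j ∧ G.Adj a b
    | Sum.inl (_, i), Sum.inr j => i = j
    | Sum.inr i, Sum.inl (_, j) => i = j
    | Sum.inr i, Sum.inr j => i ≠ j
  symm := by
    refine ⟨?_⟩; rintro (⟨a, i⟩ | i) (⟨b, j⟩ | j) h
    · exact ⟨h.1.symm, h.2.symm⟩
    · exact h.symm
    · exact h.symm
    · exact Ne.symm h
  loopless := by
    refine ⟨?_⟩; rintro (⟨a, i⟩ | i) h
    · exact G.irrefl h.2
    · exact h rfl

open Finset

namespace SPPaux

variable {S : Finset ℕ}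

abbrev VC (S : Finset ℕ) := Σ x : {x // x ∈ S}, Fin 2 × Fin (2 * x.val)
abbrev VG (S : Finset ℕ) := VC S × Fin 2 ⊕ Fin 2
abbrev GG (S : Finset ℕ) : SimpleGraph (VG S) := doubledGraph (sppGraph S)

def emb (x : {x // x ∈ S}) (c : Fin 2) : Fin 2 × Fin (2 * x.val) ↪ VG S :=
  ⟨fun p => Sum.inl (⟨x, p⟩, c), by intro p q h; simpa using h⟩

def embAll (c : Fin 2) : VC S ↪ VG S :=
  ⟨fun u => Sum.inl (u, c), by intro p q h; simpa using h⟩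

lemma emb_apply (x : {x // x ∈ S}) (c : Fin 2) (p : Fin 2 × Fin (2 * x.val)) :
    emb x c p = Sum.inl (⟨x, p⟩, c) := rfl

lemma embAll_apply (c : Fin 2) (u : VC S) : embAll c u = Sum.inl (u, c) := rfl

lemma bool_ne_filter (μ : VG S → Bool) (b : Bool) (s : Finset (VG S)) :
    (s.filter fun u => μ u ≠ b) = s.filter fun u => μ u = !b := by
  apply filter_congr
  intro u _
  cases h : μ u <;> cases b <;> simp

lemma nbhd_inl (x : {x // x ∈ S}) (q : Fin 2 × Fin (2 * x.val)) (c : Fin 2) :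
    (GG S).neighborFinset (Sum.inl (⟨x, q⟩, c)) =
    insert (Sum.inr c)
      ((univ.filter fun p : Fin 2 × Fin (2 * x.val) => (p.2 : ℕ) ≠ (q.2 : ℕ)).map (emb x c)) := by
  ext u
  simp only [SimpleGraph.mem_neighborFinset, mem_insert, Finset.mem_map, Finset.mem_filter,
    Finset.mem_univ, true_and]
  rcases u with ⟨⟨⟨y, hy⟩, p⟩, d⟩ | d
  · simp [GG, doubledGraph, sppGraph, emb_apply, -Fin.exists_fin_two]
    constructor
    · rintro ⟨rfl, h2, h3⟩
      subst h2
      exact ⟨p.1, p.2, fun h => h3 h.symm, ⟨rfl, by simp⟩, rfl⟩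
    · rintro ⟨a, b, hne, ⟨h2, hheq⟩, rfl⟩
      subst h2
      obtain rfl : (a, b) = p := eq_of_heq hheq
      exact ⟨rfl, rfl, fun h => hne h.symm⟩
  · simp [GG, doubledGraph, sppGraph, emb]
    exact eq_comm

lemma count_inl (μ : VG S → Bool) (b : Bool) (x : {x // x ∈ S})
    (q : Fin 2 × Fin (2 * x.val)) (c : Fin 2) :
    (((GG S).neighborFinset (Sum.inl (⟨x, q⟩, c))).filter fun u => μ u = b).card
    = (univ.filter fun p : Fin 2 × Fin (2 * x.val) =>
        (p.2 : ℕ) ≠ (q.2 : ℕ) ∧ μ (emb x c p) = b).card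
      + (if μ (Sum.inr c) = b then 1 else 0) := by
  rw [nbhd_inl, filter_insert]
  have hmap : (((univ.filter fun p : Fin 2 × Fin (2 * x.val) => (p.2 : ℕ) ≠ (q.2 : ℕ)).map
      (emb x c)).filter fun u => μ u = b)
      = (univ.filter fun p : Fin 2 × Fin (2 * x.val) =>
          (p.2 : ℕ) ≠ (q.2 : ℕ) ∧ μ (emb x c p) = b).map (emb x c) := by
    rw [Finset.filter_map, Finset.filter_filter]
    rfl
  have hnot : (Sum.inr c : VG S) ∉ (univ.filter fun p : Fin 2 × Fin (2 * x.val) =>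
      (p.2 : ℕ) ≠ (q.2 : ℕ) ∧ μ (emb x c p) = b).map (emb x c) := by
    simp [emb]
  split_ifs with h
  · rw [card_insert_of_notMem (by rw [hmap]; exact hnot), hmap, card_map]
  · rw [hmap, card_map]; omega

lemma nbhd_inr (c : Fin 2) :
    (GG S).neighborFinset (Sum.inr c) =
    insert (Sum.inr (c + 1)) ((univ : Finset (VC S)).map (embAll c)) := by
  have hfin : ∀ a b : Fin 2, (a ≠ b) ↔ b = a + 1 := by decide
  ext u
  simp only [SimpleGraph.mem_neighborFinset, mem_insert, Finset.mem_map, Finset.mem_univ,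
    true_and]
  rcases u with ⟨v, d⟩ | d
  · simp [GG, doubledGraph, embAll_apply]
  · simp [GG, doubledGraph, embAll]
    exact hfin c d

lemma count_inr (μ : VG S → Bool) (b : Bool) (c : Fin 2) :
    (((GG S).neighborFinset (Sum.inr c)).filter fun u => μ u = b).card
    = (univ.filter fun u : VC S => μ (Sum.inl (u, c)) = b).card
      + (if μ (Sum.inr (c + 1)) = b then 1 else 0) := by
  rw [nbhd_inr, filter_insert]
  have hmap : (((univ : Finset (VC S)).map (embAll c)).filter fun u => μ u = b)
      = (univ.filter fun u : VC S => μ (Sum.inl (u, c)) = b).map (embAll c) := by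
    rw [Finset.filter_map]
    rfl
  have hnot : (Sum.inr (c + 1) : VG S) ∉
      (univ.filter fun u : VC S => μ (Sum.inl (u, c)) = b).map (embAll c) := by
    simp [embAll]
  split_ifs with h
  · rw [card_insert_of_notMem (by rw [hmap]; exact hnot), hmap, card_map]
  · rw [hmap, card_map]; omega

lemma mono (μ : VG S → Bool) (hval : IsValidProfile (GG S) μ) (x : {x // x ∈ S}) (c : Fin 2) :
    ∀ p p' : Fin 2 × Fin (2 * x.val),
      μ (Sum.inl (⟨x, p⟩, c)) = μ (Sum.inl (⟨x, p'⟩, c)) := by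
  have key : ∀ q : Fin 2 × Fin (2 * x.val),
      (univ.filter fun r : Fin 2 × Fin (2 * x.val) =>
        μ (emb x c r) = !(μ (emb x c q))).card
      + (if μ (Sum.inr c) = !(μ (emb x c q)) then 1 else 0)
      ≤ (univ.filter fun r : Fin 2 × Fin (2 * x.val) =>
          μ (emb x c r) = μ (emb x c q)).card
        + (if μ (Sum.inr c) = μ (emb x c q) then 1 else 0) := by
    intro q
    set b := μ (emb x c q) with hb
    have hv := hval (Sum.inl (⟨x, q⟩, c))
    have hveq : μ (Sum.inl ((⟨x, q⟩ : VC S), c)) = b := rfl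
    rw [ge_iff_le, hveq, bool_ne_filter, count_inl, count_inl] at hv
    -- bound A : strict count for own opinion
    have hqmem : q ∈ univ.filter fun r : Fin 2 × Fin (2 * x.val) => μ (emb x c r) = b := by
      simp [hb]
    have hA : (univ.filter fun p : Fin 2 × Fin (2 * x.val) =>
        (p.2 : ℕ) ≠ (q.2 : ℕ) ∧ μ (emb x c p) = b).card + 1
        ≤ (univ.filter fun r : Fin 2 × Fin (2 * x.val) => μ (emb x c r) = b).card := by
      have hsub : (univ.filter fun p : Fin 2 × Fin (2 * x.val) =>
          (p.2 : ℕ) ≠ (q.2 : ℕ) ∧ μ (emb x c p) = b)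
          ⊆ (univ.filter fun r : Fin 2 × Fin (2 * x.val) => μ (emb x c r) = b).erase q := by
        intro r hr
        simp only [mem_filter, mem_univ, true_and] at hr
        rw [mem_erase]
        refine ⟨fun h => hr.1 (by rw [h]), by simp [hr.2]⟩
      have h1 := card_le_card hsub
      rw [card_erase_of_mem hqmem] at h1
      have h2 : 0 < (univ.filter fun r : Fin 2 × Fin (2 * x.val) => μ (emb x c r) = b).card :=
        card_pos.2 ⟨q, hqmem⟩
      omega
    -- bound B : opposite count
    have hB : (univ.filter fun r : Fin 2 × Fin (2 * x.val) => μ (emb x c r) = !b).card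
        ≤ (univ.filter fun p : Fin 2 × Fin (2 * x.val) =>
            (p.2 : ℕ) ≠ (q.2 : ℕ) ∧ μ (emb x c p) = !b).card + 1 := by
      have hfin2 : ∀ a b : Fin 2, a ≠ b → a = b + 1 := by decide
      have hsub : (univ.filter fun r : Fin 2 × Fin (2 * x.val) => μ (emb x c r) = !b)
          ⊆ insert (q.1 + 1, q.2) (univ.filter fun p : Fin 2 × Fin (2 * x.val) =>
              (p.2 : ℕ) ≠ (q.2 : ℕ) ∧ μ (emb x c p) = !b) := by
        intro r hr
        simp only [mem_filter, mem_univ, true_and] at hr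
        rw [mem_insert]
        by_cases hrq : (r.2 : ℕ) = (q.2 : ℕ)
        · left
          have h2 : r.2 = q.2 := Fin.val_injective hrq
          have h1 : r.1 ≠ q.1 := by
            intro h1
            have : r = q := Prod.ext h1 h2
            rw [this, hb] at hr
            simp at hr
          exact Prod.ext (hfin2 _ _ h1) h2
        · right
          simp only [mem_filter, mem_univ, true_and]
          exact ⟨hrq, hr⟩
      calc (univ.filter fun r : Fin 2 × Fin (2 * x.val) => μ (emb x c r) = !b).card
          ≤ _ := card_le_card hsub
        _ ≤ _ := card_insert_le _ _
    have hesum : (if μ (Sum.inr c) = b then 1 else 0)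
        + (if μ (Sum.inr c) = !b then 1 else 0) = 1 := by
      cases hc : μ (Sum.inr c) <;> cases b <;> simp
    omega
  intro p p'
  by_contra hne
  have hp' : μ (emb x c p') = !(μ (emb x c p)) := by
    have : μ (Sum.inl ((⟨x, p⟩ : VC S), c)) = μ (emb x c p) := rfl
    cases h1 : μ (emb x c p) <;> cases h2 : μ (emb x c p') <;>
      simp_all [emb_apply]
  have h1 := key p
  have h2 := key p'
  rw [hp', Bool.not_not] at h2
  have hsum : (univ.filter fun r : Fin 2 × Fin (2 * x.val) =>
      μ (emb x c r) = true).card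
      + (univ.filter fun r : Fin 2 × Fin (2 * x.val) => μ (emb x c r) = false).card
      = 2 * (2 * x.val) := by
    have := Finset.card_filter_add_card_filter_not
      (s := (univ : Finset (Fin 2 × Fin (2 * x.val))))
      (p := fun r => μ (emb x c r) = true)
    simp only [Bool.not_eq_true] at this
    simpa using this
  have hexact : μ (emb x c p) = μ (Sum.inl ((⟨x, p⟩ : VC S), c)) := rfl
  cases hbp : μ (emb x c p) <;> rw [hbp] at h1 h2 <;> simp only [Bool.not_true, Bool.not_false] at h1 h2 <;>
    cases hic : μ (Sum.inr c) <;> simp only [hic] at h1 h2 <;> simp at h1 h2 <;> omega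

lemma card_filter_sigma {ι : Type*} [Fintype ι] {β : ι → Type*} [∀ i, Fintype (β i)]
    (P : (Σ i, β i) → Prop) [DecidablePred P] :
    (univ.filter P).card = ∑ i, (univ.filter fun b => P ⟨i, b⟩).card := by
  rw [Finset.card_filter, ← Finset.univ_sigma_univ, Finset.sum_sigma]
  exact Finset.sum_congr rfl fun i _ => (Finset.card_filter _ _).symm

lemma W_count (μ : VG S → Bool) (c : Fin 2) (f : {x // x ∈ S} → Bool)
    (hf : ∀ (x : {x // x ∈ S}) (p : Fin 2 × Fin (2 * x.val)),
      μ (Sum.inl (⟨x, p⟩, c)) = f x) (b : Bool) :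
    (univ.filter fun u : VC S => μ (Sum.inl (u, c)) = b).card
    = ∑ x : {x // x ∈ S}, if f x = b then 2 * (2 * x.val) else 0 := by
  rw [card_filter_sigma (fun u : VC S => μ (Sum.inl (u, c)) = b)]
  apply Finset.sum_congr rfl
  intro x _
  by_cases h : f x = b
  · rw [if_pos h]
    rw [filter_true_of_mem (fun p _ => by rw [hf x p, h]), card_univ]
    simp [mul_assoc]
  · rw [if_neg h]
    rw [filter_false_of_mem (fun p _ => by rw [hf x p]; exact h), card_empty]

lemma sum_split (g : {x // x ∈ S} → ℕ) (f : {x // x ∈ S} → Bool) :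
    (∑ x : {x // x ∈ S}, if f x = true then g x else 0)
    + (∑ x : {x // x ∈ S}, if f x = false then g x else 0) = ∑ x : {x // x ∈ S}, g x := by
  rw [← Finset.sum_add_distrib]
  apply Finset.sum_congr rfl
  intro x _
  cases f x <;> simp

lemma sum_univ_subtype (g : ℕ → ℕ) : ∑ x : {x // x ∈ S}, g x.val = ∑ x ∈ S, g x :=
  Finset.sum_coe_sort S g

lemma forced_inr (μ : VG S → Bool) (hval : IsValidProfile (GG S) μ) (c : Fin 2)
    (M : ℕ) (hM : (univ.filter fun u : VC S => μ (Sum.inl (u, c)) = true).card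
      + (univ.filter fun u : VC S => μ (Sum.inl (u, c)) = false).card = 2 * M) :
    (2 * (univ.filter fun u : VC S => μ (Sum.inl (u, c)) = true).card > 2 * M →
      μ (Sum.inr c) = true)
    ∧ (2 * (univ.filter fun u : VC S => μ (Sum.inl (u, c)) = true).card < 2 * M →
      μ (Sum.inr c) = false) := by
  have hv := hval (Sum.inr c)
  set b := μ (Sum.inr c) with hb
  rw [ge_iff_le, bool_ne_filter, count_inr, count_inr] at hv
  have hesum : (if μ (Sum.inr (c + 1)) = b then 1 else 0)
      + (if μ (Sum.inr (c + 1)) = !b then 1 else 0) = 1 := by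
    cases μ (Sum.inr (c + 1)) <;> cases b <;> simp
  constructor
  · intro hgt
    by_contra hbt
    have hbf : b = false := by
      cases hx : b
      · rfl
      · exact absurd hx hbt
    rw [hbf] at hv hesum
    simp only [Bool.not_false] at hv hesum
    omega
  · intro hlt
    by_contra hbt
    have hbf : b = true := by
      cases hx : b
      · exact absurd hx hbt
      · rfl
    rw [hbf] at hv hesum
    simp only [Bool.not_true] at hv hesum
    omega

lemma card_idx_ne (x : {x // x ∈ S}) (j : Fin (2 * x.val)) :
    (univ.filter fun p : Fin 2 × Fin (2 * x.val) => (p.2 : ℕ) ≠ (j : ℕ)).card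
    = 2 * (2 * x.val) - 2 := by
  have heq : (univ.filter fun p : Fin 2 × Fin (2 * x.val) => (p.2 : ℕ) = (j : ℕ))
      = (univ : Finset (Fin 2)) ×ˢ ({j} : Finset (Fin (2 * x.val))) := by
    ext ⟨a, b⟩
    simp [Fin.val_inj, eq_comm]
  have h := Finset.card_filter_add_card_filter_not
    (s := (univ : Finset (Fin 2 × Fin (2 * x.val))))
    (p := fun p => (p.2 : ℕ) = (j : ℕ))
  rw [heq] at h
  simp only [card_product, card_univ, Fintype.card_fin, card_singleton,
    Fintype.card_prod] at h
  have : (univ.filter fun p : Fin 2 × Fin (2 * x.val) => ¬(p.2 : ℕ) = (j : ℕ)).card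
      = 2 * (2 * x.val) - 2 := by omega
  simpa using this

lemma valid_of_data (μ : VG S → Bool) (f : {x // x ∈ S} → Fin 2 → Bool) (s : Fin 2 → Bool)
    (hfl : ∀ (x : {x // x ∈ S}) (p : Fin 2 × Fin (2 * x.val)) (c : Fin 2),
      μ (Sum.inl (⟨x, p⟩, c)) = f x c)
    (hfr : ∀ c : Fin 2, μ (Sum.inr c) = s c)
    (hposS : ∀ x : {x // x ∈ S}, 1 ≤ x.val)
    (hv : ∀ c : Fin 2,
      (∑ x : {x // x ∈ S}, if f x c = !(s c) then 2 * (2 * x.val) else 0)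
        + (if s (c + 1) = !(s c) then 1 else 0)
      ≤ (∑ x : {x // x ∈ S}, if f x c = s c then 2 * (2 * x.val) else 0)
        + (if s (c + 1) = s c then 1 else 0)) :
    IsValidProfile (GG S) μ := by
  intro v
  rcases v with ⟨⟨x, p⟩, c⟩ | c
  · rw [ge_iff_le, hfl x p c, bool_ne_filter, count_inl, count_inl]
    have e1 : (univ.filter fun r : Fin 2 × Fin (2 * x.val) =>
        (r.2 : ℕ) ≠ (p.2 : ℕ) ∧ μ (emb x c r) = !(f x c)) = ∅ := by
      rw [filter_eq_empty_iff]
      intro r _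
      rw [not_and]
      intro _
      have hr : μ (emb x c r) = f x c := hfl x r c
      rw [hr]
      cases f x c <;> simp
    have e2 : (univ.filter fun r : Fin 2 × Fin (2 * x.val) =>
        (r.2 : ℕ) ≠ (p.2 : ℕ) ∧ μ (emb x c r) = f x c)
        = univ.filter fun r : Fin 2 × Fin (2 * x.val) => (r.2 : ℕ) ≠ (p.2 : ℕ) := by
      apply filter_congr
      intro r _
      have hr : μ (emb x c r) = f x c := hfl x r c
      simp [hr]
    rw [e1, e2, card_empty, card_idx_ne]
    have h1 : (if μ (Sum.inr c) = !(f x c) then 1 else 0) ≤ 1 := by split_ifs <;> simp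
    have h2 := hposS x
    omega
  · rw [ge_iff_le, hfr c, bool_ne_filter, count_inr, count_inr,
      W_count μ c (fun x => f x c) (fun x p => hfl x p c),
      W_count μ c (fun x => f x c) (fun x p => hfl x p c), hfr (c + 1)]
    exact hv c

lemma card_VC : Fintype.card (VC S) = 2 * ∑ x ∈ S, 2 * x := by
  rw [Fintype.card_sigma]
  have h1 : ∀ x : {x // x ∈ S}, Fintype.card (Fin 2 × Fin (2 * x.val)) = 2 * (2 * x.val) := by
    intro x
    simp
  calc (∑ x : {x // x ∈ S}, Fintype.card (Fin 2 × Fin (2 * x.val)))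
      = ∑ x : {x // x ∈ S}, 2 * (2 * x.val) := by
        exact Finset.sum_congr rfl fun x _ => h1 x
    _ = ∑ x ∈ S, 2 * (2 * x) := sum_univ_subtype (fun y => 2 * (2 * y))
    _ = 2 * ∑ x ∈ S, 2 * x := by rw [Finset.mul_sum]

lemma partition_W (μ : VG S → Bool) (c : Fin 2) :
    (univ.filter fun u : VC S => μ (Sum.inl (u, c)) = true).card
      + (univ.filter fun u : VC S => μ (Sum.inl (u, c)) = false).card
    = 2 * ∑ x ∈ S, 2 * x := by
  have h := Finset.card_filter_add_card_filter_not
    (s := (univ : Finset (VC S))) (p := fun u => μ (Sum.inl (u, c)) = true)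
  simp only [Bool.not_eq_true] at h
  rw [card_univ, card_VC] at h
  exact h

lemma total_sum : (∑ x : {x // x ∈ S}, 2 * (2 * x.val)) = 2 * (2 * ∑ x ∈ S, x) := by
  rw [sum_univ_subtype (fun y => 2 * (2 * y))]
  rw [Finset.mul_sum, Finset.mul_sum]

lemma sum_decide_T (T : Finset ℕ) (hT : T ⊆ S) :
    (∑ x : {x // x ∈ S}, if decide (x.val ∈ T) = true then 2 * (2 * x.val) else 0)
      = 2 * (2 * ∑ t ∈ T, t) := by
  simp only [decide_eq_true_eq]
  rw [sum_univ_subtype (fun y => if y ∈ T then 2 * (2 * y) else 0)]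
  rw [← Finset.sum_filter]
  rw [Finset.filter_mem_eq_inter, Finset.inter_eq_right.2 hT]
  rw [Finset.mul_sum, Finset.mul_sum]

end SPPaux

open SPPaux Finset

/-- a set `S` of `k` positive integers has an equal-sum partition iff
there is no information dominating set of size at most `2k` in the graph `G'`
obtained by applying the two-copies-plus-`v₁,v₂` construction to the graph built
from `S`. -/
theorem equal_sum_partition_iff_no_small_ids
    (S : Finset ℕ) (k : ℕ) (hcard : S.card = k) (hpos : ∀ x ∈ S, 0 < x) :
    (∃ T ⊆ S, ∑ x ∈ T, x = ∑ x ∈ S \ T, x) ↔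
    ¬ ∃ D : Finset ((Σ x : {x // x ∈ S}, Fin 2 × Fin (2 * x.val)) × Fin 2 ⊕ Fin 2),
        IsIDS (doubledGraph (sppGraph S)) ↑D ∧ D.card ≤ 2 * k := by
  classical
  subst hcard
  have hposS : ∀ x : {x // x ∈ S}, 1 ≤ x.val := fun x => hpos x.1 x.2
  constructor
  · rintro ⟨T, hT, hsumT⟩ ⟨D, hIDS, hDcard⟩
    have hσ : ∑ x ∈ S, x = 2 * ∑ x ∈ T, x := by
      have h : ∑ x ∈ S \ T, x + ∑ x ∈ T, x = ∑ x ∈ S, x := Finset.sum_sdiff hT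
      omega
    by_cases hcov : ∀ (x : {x // x ∈ S}) (c : Fin 2), ∃ p, (Sum.inl (⟨x, p⟩, c) : VG S) ∈ D
    · -- every component is covered, so neither extra vertex is in D
      have hinr : ∀ c : Fin 2, (Sum.inr c : VG S) ∉ D := by
        intro c hc
        choose g hg using hcov
        set F : {x // x ∈ S} × Fin 2 → VG S := fun z => Sum.inl (⟨z.1, g z.1 z.2⟩, z.2) with hF
        have hinj : Set.InjOn F ↑(univ : Finset ({x // x ∈ S} × Fin 2)) := by
          intro z _ w _ h
          simp only [F, Sum.inl.injEq, Prod.mk.injEq] at h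
          exact Prod.ext (congrArg Sigma.fst h.1) h.2
        have hmaps : ∀ z ∈ (univ : Finset ({x // x ∈ S} × Fin 2)), F z ∈ D.erase (Sum.inr c) := by
          intro z _
          exact mem_erase.2 ⟨by simp [F], hg z.1 z.2⟩
        have hcard2 := Finset.card_le_card_of_injOn F hmaps hinj
        rw [card_univ, card_erase_of_mem hc] at hcard2
        have hcardP : Fintype.card ({x // x ∈ S} × Fin 2) = S.card * 2 := by
          simp [Fintype.card_prod, Fintype.card_coe]
        have hD1 : 1 ≤ D.card := card_pos.2 ⟨_, hc⟩
        omega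
      -- the two profiles distinguished only at the extra vertices
      set μ : VG S → Bool :=
        Sum.elim (fun z => decide (z.1.1.val ∈ T)) (fun _ => false) with hμ
      set ν : VG S → Bool :=
        Sum.elim (fun z => decide (z.1.1.val ∈ T)) (fun _ => true) with hν
      have hAT := sum_decide_T (S := S) T hT
      have hsplit := sum_split (S := S) (fun x => 2 * (2 * x.val)) (fun x => decide (x.val ∈ T))
      rw [total_sum, hAT] at hsplit
      have hvμ : IsValidProfile (GG S) μ := by
        apply valid_of_data μ (fun x _ => decide (x.val ∈ T)) (fun _ => false)
          (fun x p c => rfl) (fun c => rfl) hposS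
        intro c
        simp only [Bool.not_false]
        rw [hAT]
        split_ifs <;> omega
      have hvν : IsValidProfile (GG S) ν := by
        apply valid_of_data ν (fun x _ => decide (x.val ∈ T)) (fun _ => true)
          (fun x p c => rfl) (fun c => rfl) hposS
        intro c
        simp only [Bool.not_true]
        rw [hAT]
        split_ifs <;> omega
      have hagree : ∀ v ∈ (↑D : Set (VG S)), μ v = ν v := by
        intro v hv
        rcases v with ⟨⟨y, p⟩, c⟩ | c
        · rfl
        · exact absurd (Finset.mem_coe.1 hv) (hinr c)
      have heq := hIDS μ ν hvμ hvν hagree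
      have := congrFun heq (Sum.inr 0)
      simp [hμ, hν] at this
    · -- some component is uncovered
      push_neg at hcov
      obtain ⟨x₀, c₀, hx₀⟩ := hcov
      have hx₀le : 2 * x₀.val ≤ ∑ x ∈ S, x := by
        by_cases hmem : x₀.val ∈ T
        · have h1 : x₀.val ≤ ∑ x ∈ T, x :=
            Finset.single_le_sum (fun i _ => Nat.zero_le i) hmem
          omega
        · have hmem' : x₀.val ∈ S \ T := mem_sdiff.2 ⟨x₀.2, hmem⟩
          have h1 : x₀.val ≤ ∑ x ∈ S \ T, x :=
            Finset.single_le_sum (fun i _ => Nat.zero_le i) hmem'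
          omega
      set μ : VG S → Bool := Sum.elim (fun _ => false) (fun _ => false) with hμ
      set ν : VG S → Bool :=
        Sum.elim (fun z => decide (z.1.1 = x₀ ∧ z.2 = c₀)) (fun _ => false) with hν
      have hvμ : IsValidProfile (GG S) μ := by
        apply valid_of_data μ (fun _ _ => false) (fun _ => false)
          (fun x p c => rfl) (fun c => rfl) hposS
        intro c
        simp
      have hsing : ∀ c : Fin 2,
          (∑ x : {x // x ∈ S}, if decide (x = x₀ ∧ c = c₀) = true then 2 * (2 * x.val) else 0)
          ≤ 2 * (2 * x₀.val) := by
        intro c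
        by_cases hc : c = c₀
        · subst hc
          simp only [decide_eq_true_eq, and_true]
          rw [Finset.sum_ite_eq' univ x₀ (fun x => 2 * (2 * x.val))]
          simp
        · have : ∀ x : {x // x ∈ S},
              (if decide (x = x₀ ∧ c = c₀) = true then 2 * (2 * x.val) else 0) = 0 := by
            intro x
            simp [hc]
          rw [Finset.sum_congr rfl (fun x _ => this x)]
          simp
      have hvν : IsValidProfile (GG S) ν := by
        apply valid_of_data ν (fun x c => decide (x = x₀ ∧ c = c₀)) (fun _ => false)
          (fun x p c => rfl) (fun c => rfl) hposS
        intro c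
        simp only [Bool.not_false]
        have hsplit := sum_split (S := S) (fun x => 2 * (2 * x.val))
          (fun x => decide (x = x₀ ∧ c = c₀))
        rw [total_sum] at hsplit
        have h1 := hsing c
        split_ifs <;> omega
      have hagree : ∀ v ∈ (↑D : Set (VG S)), μ v = ν v := by
        intro v hv
        rcases v with ⟨⟨y, p⟩, c⟩ | c
        · show false = decide (y = x₀ ∧ c = c₀)
          rcases Bool.eq_false_or_eq_true (decide (y = x₀ ∧ c = c₀)) with h | h
          · exfalso
            rw [decide_eq_true_eq] at h
            obtain ⟨rfl, rfl⟩ := h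
            exact hx₀ p (Finset.mem_coe.1 hv)
          · rw [h]
        · rfl
      have heq := hIDS μ ν hvμ hvν hagree
      have := congrFun heq (Sum.inl (⟨x₀, (0, ⟨0, by have := hposS x₀; omega⟩)⟩, c₀))
      simp [hμ, hν] at this
  · -- no small IDS → partition exists
    intro hnoD
    by_contra hnoT
    push_neg at hnoT
    apply hnoD
    set F : {x // x ∈ S} × Fin 2 → VG S :=
      fun z => Sum.inl (⟨z.1, (0, ⟨0, by have := hposS z.1; omega⟩)⟩, z.2) with hF
    have hFinj : Function.Injective F := by
      intro z w h
      simp only [F, Sum.inl.injEq, Prod.mk.injEq] at h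
      exact Prod.ext (congrArg Sigma.fst h.1) h.2
    refine ⟨(univ : Finset ({x // x ∈ S} × Fin 2)).image F, ?_, ?_⟩
    · -- it is an IDS
      intro μ ν hμ hν hagree
      have hinl : ∀ (y : {x // x ∈ S}) (p : Fin 2 × Fin (2 * y.val)) (c : Fin 2),
          μ (Sum.inl (⟨y, p⟩, c)) = ν (Sum.inl (⟨y, p⟩, c)) := by
        intro y p c
        have h1 := mono μ hμ y c p (0, ⟨0, by have := hposS y; omega⟩)
        have h2 := mono ν hν y c p (0, ⟨0, by have := hposS y; omega⟩)
        have h3 : μ (F (y, c)) = ν (F (y, c)) := by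
          apply hagree
          exact Finset.mem_coe.2 (Finset.mem_image_of_mem F (mem_univ (y, c)))
        rw [h1, h2]
        exact h3
      funext u
      rcases u with ⟨⟨y, p⟩, c⟩ | c
      · exact hinl y p c
      · -- extra vertices
        set W := (univ.filter fun u : VC S => μ (Sum.inl (u, c)) = true).card with hW
        have hWν : (univ.filter fun u : VC S => ν (Sum.inl (u, c)) = true).card = W := by
          rw [hW]
          congr 1
          apply filter_congr
          rintro ⟨y, p⟩ _
          rw [hinl]
        have hMμ := partition_W (S := S) μ c
        have hMν := partition_W (S := S) ν c
        -- W is not exactly half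
        have hWne : W ≠ ∑ x ∈ S, 2 * x := by
          intro heq
          have hWc : W = ∑ y : {x // x ∈ S},
              if μ (Sum.inl (⟨y, (0, ⟨0, by have := hposS y; omega⟩)⟩, c)) = true
              then 2 * (2 * y.val) else 0 :=
            W_count μ c _ (fun y p => mono μ hμ y c p _) true
          set T' : Finset ℕ := (univ.filter fun y : {x // x ∈ S} =>
            μ (Sum.inl (⟨y, (0, ⟨0, by have := hposS y; omega⟩)⟩, c)) = true).image
            Subtype.val with hT'
          have hT'sub : T' ⊆ S := by
            intro t ht
            rw [hT', Finset.mem_image] at ht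
            obtain ⟨a, _, rfl⟩ := ht
            exact a.2
          have hsum' : W = ∑ t ∈ T', 2 * (2 * t) := by
            rw [hWc, hT', Finset.sum_image (fun a _ b _ h => Subtype.ext h)]
            rw [Finset.sum_filter]
          have h4T : ∑ t ∈ T', 2 * (2 * t) = 2 * (2 * ∑ t ∈ T', t) := by
            rw [Finset.mul_sum, Finset.mul_sum]
          have hs2 : ∑ x ∈ S, 2 * x = 2 * ∑ x ∈ S, x := by rw [Finset.mul_sum]
          have hsd : ∑ x ∈ S \ T', x + ∑ x ∈ T', x = ∑ x ∈ S, x := Finset.sum_sdiff hT'sub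
          have := hnoT T' hT'sub
          omega
        rcases Nat.lt_or_ge W (∑ x ∈ S, 2 * x) with h | h
        · have hμc := (forced_inr μ hμ c _ hMμ).2 (by omega)
          have hνc := (forced_inr ν hν c _ hMν).2 (by rw [hWν]; omega)
          rw [hμc, hνc]
        · have hgt : W > ∑ x ∈ S, 2 * x := lt_of_le_of_ne h (Ne.symm hWne)
          have hμc := (forced_inr μ hμ c _ hMμ).1 (by omega)
          have hνc := (forced_inr ν hν c _ hMν).1 (by rw [hWν]; omega)
          rw [hμc, hνc]
    · -- cardinality
      rw [Finset.card_image_of_injective _ hFinj, card_univ]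
      simp [Fintype.card_prod, Fintype.card_coe]
      omega
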